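/- For every bipartite data dissemination instance over F₂ and every valid one-round scheme (S_a)_{a∈A}, the total number of transmissions Σ_{a∈A} |S_a| is at least minrank₂(H), where H is the side information graph of the instance. -/

import Mathlib

open Matrix

/-- A valid one-round scheme for a bipartite data dissemination instance over `F₂`:
transmitters form the type `A`, receivers are `Fin n`, and `E a ℓ` means there is an edge
from transmitter `a` to receiver `ℓ`. Each transmitter `a` broadcasts the finite set of
vectors `S a`, and every receiver `ℓ` (possessing the side information `{x_j : j ∈ P ℓ}`
and requesting `x_ℓ`) can decode: `e_ℓ` lies in the span of the vectors sent by the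
transmitters adjacent to `ℓ` together with `{e_j : j ∈ P ℓ}`. -/
def BipartiteValidScheme {A : Type*} {n : ℕ} (E : A → Fin n → Prop)
    (P : Fin n → Set (Fin n)) (S : A → Finset (Fin n → ZMod 2)) : Prop :=
  ∀ ℓ : Fin n, Pi.single ℓ (1 : ZMod 2) ∈
    Submodule.span (ZMod 2)
      ((⋃ a ∈ {a | E a ℓ}, (S a : Set (Fin n → ZMod 2))) ∪
        {v | ∃ j ∈ P ℓ, v = Pi.single j 1})

/-- A matrix `M` over `F₂` fits the side information graph `H` on `{1,…,n}` (with an edge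
`(i,j)` iff `j ∈ P i`) if its diagonal entries are `1` and `M i j = 0` whenever `i ≠ j` and
`(i,j)` is not an edge of `H`. -/
def FitsSI {n : ℕ} (P : Fin n → Set (Fin n))
    (M : Matrix (Fin n) (Fin n) (ZMod 2)) : Prop :=
  (∀ i, M i i = 1) ∧ ∀ i j, i ≠ j → j ∉ P i → M i j = 0

/-- `minrank₂` of the side information graph determined by `P`. -/
noncomputable def minrank2 {n : ℕ} (P : Fin n → Set (Fin n)) : ℕ :=
  sInf {r | ∃ M : Matrix (Fin n) (Fin n) (ZMod 2), FitsSI P M ∧ M.rank = r}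

/-- For every bipartite data dissemination instance over `F₂` and every
valid one-round scheme `(S a)_{a ∈ A}`, the total number of transmissions `Σ_a |S a|` is
at least `minrank₂ H`, where `H` is the side information graph of the instance. -/
theorem bipartite_lower_bound_minrank {A : Type*} [Fintype A] {n : ℕ}
    (E : A → Fin n → Prop) (P : Fin n → Set (Fin n)) (hP : ∀ ℓ, ℓ ∉ P ℓ)
    (S : A → Finset (Fin n → ZMod 2)) (hS : BipartiteValidScheme E P S) :
    minrank2 P ≤ ∑ a, (S a).card := by
  classical
  -- all transmitted vectors
  set T : Finset (Fin n → ZMod 2) := Finset.univ.biUnion S with hT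
  -- decompose e_ℓ = u ℓ + w ℓ with u ℓ in span T and w ℓ in span of side-info vectors
  have hdec : ∀ ℓ : Fin n, ∃ u ∈ Submodule.span (ZMod 2) (T : Set (Fin n → ZMod 2)),
      ∃ w ∈ Submodule.span (ZMod 2) {v : Fin n → ZMod 2 | ∃ j ∈ P ℓ, v = Pi.single j 1},
      u + w = Pi.single ℓ (1 : ZMod 2) := by
    intro ℓ
    have h := hS ℓ
    have hsub : ((⋃ a ∈ {a | E a ℓ}, ((S a : Set (Fin n → ZMod 2)))) ∪
        {v | ∃ j ∈ P ℓ, v = Pi.single j 1}) ⊆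
        ((T : Set (Fin n → ZMod 2)) ∪ {v | ∃ j ∈ P ℓ, v = Pi.single j 1}) := by
      apply Set.union_subset_union_left
      intro v hv
      simp only [Set.mem_iUnion] at hv
      obtain ⟨a, _, hv⟩ := hv
      simp only [hT, Finset.coe_biUnion, Finset.mem_coe, Finset.mem_univ, Set.mem_iUnion]
      exact ⟨a, trivial, hv⟩
    have h' := Submodule.span_mono hsub h
    rw [Submodule.span_union, Submodule.mem_sup] at h'
    obtain ⟨u, hu, w, hw, huw⟩ := h'
    exact ⟨u, hu, w, hw, huw⟩
  choose u hu w hw huw using hdec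
  -- side-info vectors vanish outside P ℓ
  have hwz : ∀ ℓ j, j ∉ P ℓ → w ℓ j = 0 := by
    intro ℓ
    let V : Submodule (ZMod 2) (Fin n → ZMod 2) :=
      { carrier := {v | ∀ j, j ∉ P ℓ → v j = 0}
        add_mem' := by
          intro x y hx hy j hj
          simp [hx j hj, hy j hj]
        zero_mem' := by intro j _; rfl
        smul_mem' := by
          intro c x hx j hj
          simp [hx j hj] }
    have hle : Submodule.span (ZMod 2) {v : Fin n → ZMod 2 | ∃ j ∈ P ℓ, v = Pi.single j 1} ≤ V := by
      rw [Submodule.span_le]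
      rintro v ⟨j, hj, rfl⟩ k hk
      have : k ≠ j := fun h => hk (h ▸ hj)
      simp [Pi.single_apply, this]
    exact fun j hj => hle (hw ℓ) j hj
  -- the fitting matrix
  set M : Matrix (Fin n) (Fin n) (ZMod 2) := Matrix.of (fun ℓ j => u ℓ j) with hM
  have hrow : ∀ ℓ, M ℓ = Pi.single ℓ (1 : ZMod 2) - w ℓ := by
    intro ℓ
    funext j
    have := congrFun (huw ℓ) j
    simp only [Pi.add_apply] at this
    simp [hM, Pi.sub_apply, ← this]
  have hfit : FitsSI P M := by
    constructor
    · intro i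
      have := congrFun (hrow i) i
      simp only [Pi.sub_apply, Pi.single_eq_same] at this
      rw [this, hwz i i (hP i), sub_zero]
    · intro i j hij hj
      have := congrFun (hrow i) j
      simp only [Pi.sub_apply] at this
      rw [this, hwz i j hj, Pi.single_apply, if_neg (Ne.symm hij), sub_zero]
  -- rank bound : rank M ≤ card T
  have hrank : M.rank ≤ T.card := by
    have h1 : M.rank = Module.finrank (ZMod 2)
        (Submodule.span (ZMod 2) (Set.range M)) := by
      rw [← Matrix.rank_transpose M, Matrix.rank_eq_finrank_span_cols]
      rfl
    have h2 : Submodule.span (ZMod 2) (Set.range M) ≤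
        Submodule.span (ZMod 2) (T : Set (Fin n → ZMod 2)) := by
      rw [Submodule.span_le]
      rintro v ⟨ℓ, rfl⟩
      exact hu ℓ
    calc M.rank = Module.finrank (ZMod 2) (Submodule.span (ZMod 2) (Set.range M)) := h1
      _ ≤ Module.finrank (ZMod 2)
          (Submodule.span (ZMod 2) (T : Set (Fin n → ZMod 2))) :=
        Submodule.finrank_mono h2
      _ ≤ T.card := finrank_span_finset_le_card T
  have hTcard : T.card ≤ ∑ a, (S a).card := Finset.card_biUnion_le
  have hmem : minrank2 P ≤ M.rank :=
    Nat.sInf_le ⟨M, hfit, rfl⟩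
  exact hmem.trans (hrank.trans hTcard)
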